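/- Let σ₁ and σ₂ be nonnegative, continuous, integrable functions on (0,1) such that σ₁ majorizes σ₂. Then for every average SNR ρ ≥ 0 and every bandwidth W > 0, the average rate with no CSI at the transmitter satisfies C_no(σ₁,ρ,W) ≤ C_no(σ₂,ρ,W); i.e., the functional σ ↦ C_no(σ,ρ,W) is Schur-concave with respect to the spectral fading variance σ. -/

import Mathlib

open MeasureTheory Real Set
open scoped ENNReal

/-- Distribution function of a measurable function on (0,1):
`d_x(s) = μ({t ∈ (0,1) : x(t) > s})`. -/
noncomputable def distFun (x : ℝ → ℝ) (s : ℝ) : ℝ :=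
  (volume {t | t ∈ Ioo (0 : ℝ) 1 ∧ x t > s}).toReal

/-- Decreasing rearrangement: `x*(t) = inf {s : d_x(s) ≤ t}`. -/
noncomputable def decRearr (x : ℝ → ℝ) (t : ℝ) : ℝ :=
  sInf {s : ℝ | distFun x s ≤ t}

namespace CnoAux

noncomputable def eD (x : ℝ → ℝ) (s : ℝ) : ℝ≥0∞ :=
  volume {t | t ∈ Ioo (0 : ℝ) 1 ∧ x t > s}

lemma setOf_eq (x : ℝ → ℝ) (s : ℝ) :
    {t | t ∈ Ioo (0 : ℝ) 1 ∧ x t > s} = Ioo (0:ℝ) 1 ∩ x ⁻¹' (Ioi s) := rfl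

lemma measSet {x : ℝ → ℝ} (hc : ContinuousOn x (Ioo 0 1)) (s : ℝ) :
    MeasurableSet {t | t ∈ Ioo (0 : ℝ) 1 ∧ x t > s} := by
  rw [setOf_eq]
  exact (hc.isOpen_inter_preimage isOpen_Ioo isOpen_Ioi).measurableSet

lemma eD_le_one (x : ℝ → ℝ) (s : ℝ) : eD x s ≤ 1 := by
  have h := measure_mono (μ := volume) (show {t | t ∈ Ioo (0:ℝ) 1 ∧ x t > s} ⊆ Ioo 0 1 from
    fun t ht => ht.1)
  simpa [eD, Real.volume_Ioo] using h

lemma eD_ne_top (x : ℝ → ℝ) (s : ℝ) : eD x s ≠ ⊤ :=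
  ne_top_of_le_ne_top ENNReal.one_ne_top (eD_le_one x s)

lemma distFun_eq (x : ℝ → ℝ) (s : ℝ) : distFun x s = (eD x s).toReal := rfl

lemma distFun_nonneg (x : ℝ → ℝ) (s : ℝ) : 0 ≤ distFun x s := ENNReal.toReal_nonneg

lemma distFun_le_one (x : ℝ → ℝ) (s : ℝ) : distFun x s ≤ 1 := by
  rw [distFun_eq]
  exact ENNReal.toReal_le_of_le_ofReal one_pos.le (by simpa using eD_le_one x s)

lemma distFun_antitone (x : ℝ → ℝ) : Antitone (distFun x) := by
  intro s s' hss'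
  rw [distFun_eq, distFun_eq]
  exact ENNReal.toReal_mono (eD_ne_top x s)
    (measure_mono fun t ht => ⟨ht.1, lt_of_le_of_lt hss' ht.2⟩)

lemma distFun_eq_one_of_neg {x : ℝ → ℝ} (hnn : ∀ t ∈ Ioo (0:ℝ) 1, 0 ≤ x t)
    {s : ℝ} (hs : s < 0) : distFun x s = 1 := by
  have : {t | t ∈ Ioo (0 : ℝ) 1 ∧ x t > s} = Ioo (0:ℝ) 1 := by
    ext t
    exact ⟨fun h => h.1, fun h => ⟨h, lt_of_lt_of_le hs (hnn t h)⟩⟩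
  rw [distFun, this]
  simp [Real.volume_Ioo]

end CnoAux

namespace CnoAux

lemma distFun_rc {x : ℝ → ℝ} {s c : ℝ} (h0 : 0 ≤ c)
    (h : ∀ ε > (0:ℝ), distFun x (s + ε) ≤ c) : distFun x s ≤ c := by
  set A : ℕ → Set ℝ := fun n => {t | t ∈ Ioo (0:ℝ) 1 ∧ x t > s + 1 / (n + 1)} with hA
  have hmono : Monotone A := by
    intro m n hmn t ht
    refine ⟨ht.1, lt_of_le_of_lt ?_ ht.2⟩
    have hcast := (Nat.cast_le (α := ℝ)).2 hmn
    have : (1:ℝ) / (n + 1) ≤ 1 / (m + 1) := by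
      refine one_div_le_one_div_of_le (by positivity) (by linarith)
    linarith
  have hUnion : (⋃ n, A n) = {t | t ∈ Ioo (0:ℝ) 1 ∧ x t > s} := by
    ext t
    simp only [mem_iUnion, hA, mem_setOf_eq]
    constructor
    · rintro ⟨n, ht, hlt⟩
      have hp : (0:ℝ) < 1 / ((n:ℝ) + 1) := by positivity
      exact ⟨ht, by linarith⟩
    · rintro ⟨ht, hlt⟩
      obtain ⟨n, hn⟩ := exists_nat_one_div_lt (sub_pos.2 hlt)
      exact ⟨n, ht, by linarith⟩
  have hle : ∀ n : ℕ, eD x (s + 1 / (n + 1)) ≤ ENNReal.ofReal c := by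
    intro n
    have hp : (0:ℝ) < 1 / ((n:ℝ) + 1) := by positivity
    exact (ENNReal.le_ofReal_iff_toReal_le (eD_ne_top _ _) h0).2 (h _ hp)
  have : eD x s ≤ ENNReal.ofReal c := by
    rw [eD, ← hUnion, hmono.measure_iUnion]
    exact iSup_le fun n => hle n
  exact ENNReal.toReal_le_of_le_ofReal h0 this

lemma exists_distFun_le {x : ℝ → ℝ} (hc : ContinuousOn x (Ioo 0 1)) {c : ℝ}
    (hcpos : 0 < c) : ∃ s : ℝ, distFun x s ≤ c := by
  set B : ℕ → Set ℝ := fun n => {t | t ∈ Ioo (0:ℝ) 1 ∧ x t > (n:ℝ)} with hB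
  have hanti : Antitone B := by
    intro m n hmn t ht
    exact ⟨ht.1, lt_of_le_of_lt ((Nat.cast_le (α := ℝ)).2 hmn) ht.2⟩
  have hempty : (⋂ n, B n) = ∅ := by
    ext t
    simp only [mem_iInter, hB, mem_setOf_eq, mem_empty_iff_false, iff_false, not_forall]
    obtain ⟨n, hn⟩ := exists_nat_gt (x t)
    exact ⟨n, fun h => absurd h.2 (not_lt.2 hn.le)⟩
  have hInter : volume (⋂ n, B n) = ⨅ n, volume (B n) :=
    hanti.measure_iInter (fun n => (measSet hc _).nullMeasurableSet)
      ⟨0, by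
        have hle : volume (B 0) ≤ 1 := by
          have := measure_mono (μ := volume)
            (show B 0 ⊆ Ioo (0:ℝ) 1 from fun t ht => ht.1)
          simpa [Real.volume_Ioo] using this
        exact ne_top_of_le_ne_top ENNReal.one_ne_top hle⟩
  have h0 : (⨅ n, volume (B n)) = 0 := by
    rw [← hInter, hempty]; simp
  have : (⨅ n, volume (B n)) < ENNReal.ofReal c := by
    rw [h0]; exact ENNReal.ofReal_pos.2 hcpos
  obtain ⟨n, hn⟩ := iInf_lt_iff.1 this
  exact ⟨n, ENNReal.toReal_le_of_le_ofReal hcpos.le hn.le⟩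

lemma lowerBound_A {x : ℝ → ℝ} (hnn : ∀ t ∈ Ioo (0:ℝ) 1, 0 ≤ x t) {t : ℝ} (ht : t < 1) :
    ∀ s' ∈ {s : ℝ | distFun x s ≤ t}, (0:ℝ) ≤ s' := by
  intro s' hs'
  by_contra hneg
  rw [mem_setOf_eq, distFun_eq_one_of_neg hnn (not_le.1 hneg)] at hs'
  linarith

lemma bddBelow_A {x : ℝ → ℝ} (hnn : ∀ t ∈ Ioo (0:ℝ) 1, 0 ≤ x t) {t : ℝ} (ht : t < 1) :
    BddBelow {s : ℝ | distFun x s ≤ t} := ⟨0, fun s' hs' => lowerBound_A hnn ht s' hs'⟩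

lemma nonempty_A {x : ℝ → ℝ} (hc : ContinuousOn x (Ioo 0 1)) {t : ℝ} (ht : 0 < t) :
    {s : ℝ | distFun x s ≤ t}.Nonempty := exists_distFun_le hc ht

lemma decRearr_nonneg {x : ℝ → ℝ} (hnn : ∀ t ∈ Ioo (0:ℝ) 1, 0 ≤ x t)
    (hc : ContinuousOn x (Ioo 0 1)) {t : ℝ} (ht : t ∈ Ioo (0:ℝ) 1) :
    0 ≤ decRearr x t :=
  le_csInf (nonempty_A hc ht.1) (lowerBound_A hnn ht.2)

lemma decRearr_gt_iff {x : ℝ → ℝ} (hnn : ∀ t ∈ Ioo (0:ℝ) 1, 0 ≤ x t)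
    (hc : ContinuousOn x (Ioo 0 1)) {t : ℝ} (ht : t ∈ Ioo (0:ℝ) 1) (s : ℝ) :
    s < decRearr x t ↔ t < distFun x s := by
  constructor
  · intro hlt
    by_contra hnot
    have : decRearr x t ≤ s := csInf_le (bddBelow_A hnn ht.2) (not_lt.1 hnot)
    linarith
  · intro hlt
    have hex : ∃ ε > (0:ℝ), t < distFun x (s + ε) := by
      by_contra hnot
      push_neg at hnot
      have := distFun_rc (le_of_lt ht.1) (fun ε hε => hnot ε hε)
      linarith
    obtain ⟨ε, hε, hεlt⟩ := hex
    have hlb : ∀ s' ∈ {s : ℝ | distFun x s ≤ t}, s + ε ≤ s' := by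
      intro s' hs'
      by_contra hnot
      have h1 : distFun x (s + ε) ≤ distFun x s' := distFun_antitone x (not_le.1 hnot).le
      rw [mem_setOf_eq] at hs'
      linarith
    have : s + ε ≤ decRearr x t := le_csInf (nonempty_A hc ht.1) hlb
    linarith

lemma decRearr_antitoneOn {x : ℝ → ℝ} (hnn : ∀ t ∈ Ioo (0:ℝ) 1, 0 ≤ x t)
    (hc : ContinuousOn x (Ioo 0 1)) :
    AntitoneOn (decRearr x) (Ioo (0:ℝ) 1) := by
  intro t₁ ht₁ t₂ ht₂ h12
  exact csInf_le_csInf (bddBelow_A hnn ht₂.2) (nonempty_A hc ht₁.1)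
    (fun s hs => le_trans hs h12)

end CnoAux

namespace CnoAux

lemma map_decRearr_eq {x : ℝ → ℝ} (hnn : ∀ t ∈ Ioo (0:ℝ) 1, 0 ≤ x t)
    (hc : ContinuousOn x (Ioo 0 1)) :
    Measure.map x (volume.restrict (Ioo 0 1)) =
      Measure.map (decRearr x) (volume.restrict (Ioo 0 1)) := by
  set μI := volume.restrict (Ioo (0:ℝ) 1) with hμI
  have hmx : AEMeasurable x μI := hc.aemeasurable measurableSet_Ioo
  have hmr : AEMeasurable (decRearr x) μI :=
    aemeasurable_restrict_of_antitoneOn measurableSet_Ioo (decRearr_antitoneOn hnn hc)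
  have huniv1 : Measure.map x μI univ = 1 := by
    rw [Measure.map_apply_of_aemeasurable hmx MeasurableSet.univ]
    simp [hμI, Real.volume_Ioo]
  have huniv2 : Measure.map (decRearr x) μI univ = 1 := by
    rw [Measure.map_apply_of_aemeasurable hmr MeasurableSet.univ]
    simp [hμI, Real.volume_Ioo]
  have hIoi : ∀ s : ℝ, Measure.map x μI (Ioi s) = Measure.map (decRearr x) μI (Ioi s) := by
    intro s
    have h1 : Measure.map x μI (Ioi s) = eD x s := by
      rw [Measure.map_apply_of_aemeasurable hmx measurableSet_Ioi, hμI,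
        Measure.restrict_apply' measurableSet_Ioo]
      congr 1
      ext t
      simp only [mem_inter_iff, mem_preimage, mem_Ioi, mem_setOf_eq]
      exact ⟨fun h => ⟨h.2, h.1⟩, fun h => ⟨h.2, h.1⟩⟩
    have h2 : Measure.map (decRearr x) μI (Ioi s) = eD x s := by
      rw [Measure.map_apply_of_aemeasurable hmr measurableSet_Ioi, hμI,
        Measure.restrict_apply' measurableSet_Ioo]
      have hset : decRearr x ⁻¹' Ioi s ∩ Ioo 0 1 = Ioo (0:ℝ) (distFun x s) := by
        ext t
        simp only [mem_inter_iff, mem_preimage, mem_Ioi, mem_Ioo]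
        constructor
        · rintro ⟨hst, ht0, ht1⟩
          exact ⟨ht0, (decRearr_gt_iff hnn hc ⟨ht0, ht1⟩ s).1 hst⟩
        · rintro ⟨ht0, htd⟩
          have ht1 : t < 1 := lt_of_lt_of_le htd (distFun_le_one x s)
          exact ⟨(decRearr_gt_iff hnn hc ⟨ht0, ht1⟩ s).2 htd, ht0, ht1⟩
      rw [hset, Real.volume_Ioo, sub_zero, distFun_eq,
        ENNReal.ofReal_toReal (eD_ne_top x s)]
    rw [h1, h2]
  haveI : IsFiniteMeasure (Measure.map x μI) :=
    ⟨by rw [huniv1]; exact ENNReal.one_lt_top⟩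
  refine MeasureTheory.Measure.ext_of_Iic _ _ (fun s => ?_)
  have hne1 : Measure.map x μI (Ioi s) ≠ ⊤ := measure_ne_top _ _
  have hne2 : Measure.map (decRearr x) μI (Ioi s) ≠ ⊤ := by
    rw [← hIoi s]; exact measure_ne_top _ _
  rw [← compl_Ioi, measure_compl measurableSet_Ioi hne1,
    measure_compl measurableSet_Ioi hne2, huniv1, huniv2, hIoi s]

end CnoAux

namespace CnoAux

lemma integral_comp_decRearr {x : ℝ → ℝ} (hnn : ∀ t ∈ Ioo (0:ℝ) 1, 0 ≤ x t)
    (hc : ContinuousOn x (Ioo 0 1)) {G : ℝ → ℝ} (hG : Continuous G) :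
    ∫ t in Ioo (0:ℝ) 1, G (x t) = ∫ t in Ioo (0:ℝ) 1, G (decRearr x t) := by
  have hmx : AEMeasurable x (volume.restrict (Ioo (0:ℝ) 1)) :=
    hc.aemeasurable measurableSet_Ioo
  have hmr : AEMeasurable (decRearr x) (volume.restrict (Ioo (0:ℝ) 1)) :=
    aemeasurable_restrict_of_antitoneOn measurableSet_Ioo (decRearr_antitoneOn hnn hc)
  rw [← integral_map hmx hG.aestronglyMeasurable, map_decRearr_eq hnn hc,
    integral_map hmr hG.aestronglyMeasurable]

lemma integrable_comp_decRearr {x : ℝ → ℝ} (hnn : ∀ t ∈ Ioo (0:ℝ) 1, 0 ≤ x t)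
    (hc : ContinuousOn x (Ioo 0 1)) {G : ℝ → ℝ} (hG : Continuous G)
    (hint : IntegrableOn (fun t => G (x t)) (Ioo 0 1)) :
    IntegrableOn (fun t => G (decRearr x t)) (Ioo 0 1) := by
  have hmx : AEMeasurable x (volume.restrict (Ioo (0:ℝ) 1)) :=
    hc.aemeasurable measurableSet_Ioo
  have hmr : AEMeasurable (decRearr x) (volume.restrict (Ioo (0:ℝ) 1)) :=
    aemeasurable_restrict_of_antitoneOn measurableSet_Ioo (decRearr_antitoneOn hnn hc)
  have h1 : Integrable G (Measure.map x (volume.restrict (Ioo (0:ℝ) 1))) :=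
    (integrable_map_measure hG.aestronglyMeasurable hmx).2 hint
  rw [map_decRearr_eq hnn hc] at h1
  exact (integrable_map_measure hG.aestronglyMeasurable hmr).1 h1

lemma integrable_decRearr {x : ℝ → ℝ} (hnn : ∀ t ∈ Ioo (0:ℝ) 1, 0 ≤ x t)
    (hc : ContinuousOn x (Ioo 0 1)) (hint : IntegrableOn x (Ioo 0 1)) :
    IntegrableOn (decRearr x) (Ioo 0 1) := by
  have h := integrable_comp_decRearr (G := fun a => a) hnn hc continuous_id
    (by simpa using hint)
  simpa using h

end CnoAux

namespace CnoAux

noncomputable def Gfun (k a : ℝ) : ℝ :=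
  ∫ z in Ioi (0:ℝ), Real.log (1 + k * max a 0 * z) * Real.exp (-z)

noncomputable def Pfun (k a : ℝ) : ℝ :=
  ∫ z in Ioi (0:ℝ), k * z / (1 + k * max a 0 * z) * Real.exp (-z)

lemma int_zexp : IntegrableOn (fun z => z * Real.exp (-z)) (Ioi (0:ℝ)) := by
  have h := Real.GammaIntegral_convergent (by norm_num : (0:ℝ) < 2)
  refine h.congr_fun (fun z hz => ?_) measurableSet_Ioi
  norm_num [mul_comm]

lemma val_zexp : ∫ z in Ioi (0:ℝ), z * Real.exp (-z) = 1 := by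
  have h := (Real.Gamma_eq_integral (by norm_num : (0:ℝ) < 2)).symm
  have h2 : Real.Gamma 2 = 1 := by
    rw [show (2:ℝ) = (1:ℕ) + 1 by norm_num, Real.Gamma_nat_eq_factorial]
    norm_num
  rw [← h2, ← h]
  refine setIntegral_congr_fun measurableSet_Ioi (fun z hz => ?_)
  norm_num [mul_comm]

lemma int_log {c : ℝ} (hc : 0 ≤ c) :
    IntegrableOn (fun z => Real.log (1 + c * z) * Real.exp (-z)) (Ioi (0:ℝ)) := by
  refine Integrable.mono' (int_zexp.const_mul c) ?_ ?_
  · exact ((Real.measurable_log.comp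
      (measurable_const.add (measurable_id.const_mul c))).mul
      (Real.measurable_exp.comp measurable_neg)).aestronglyMeasurable
  · filter_upwards [ae_restrict_mem measurableSet_Ioi] with z hz
    have hz0 : (0:ℝ) < z := hz
    have hcz : 0 ≤ c * z := mul_nonneg hc hz0.le
    have hlognn : 0 ≤ Real.log (1 + c * z) := Real.log_nonneg (by linarith)
    have hlog : Real.log (1 + c * z) ≤ c * z := by
      have := Real.log_le_sub_one_of_pos (show (0:ℝ) < 1 + c * z by linarith)
      linarith
    rw [Real.norm_eq_abs, abs_of_nonneg (mul_nonneg hlognn (Real.exp_pos _).le)]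
    calc Real.log (1 + c * z) * Real.exp (-z) ≤ (c * z) * Real.exp (-z) :=
            mul_le_mul_of_nonneg_right hlog (Real.exp_pos _).le
      _ = c * (z * Real.exp (-z)) := by ring

lemma int_frac {k c : ℝ} (hk : 0 ≤ k) (hc : 0 ≤ c) :
    IntegrableOn (fun z => k * z / (1 + c * z) * Real.exp (-z)) (Ioi (0:ℝ)) := by
  refine Integrable.mono' (int_zexp.const_mul k) ?_ ?_
  · exact (((measurable_id.const_mul k).div
      (measurable_const.add (measurable_id.const_mul c))).mul
      (Real.measurable_exp.comp measurable_neg)).aestronglyMeasurable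
  · filter_upwards [ae_restrict_mem measurableSet_Ioi] with z hz
    have hz0 : (0:ℝ) < z := hz
    have hcz : 0 ≤ c * z := mul_nonneg hc hz0.le
    have hfracnn : 0 ≤ k * z / (1 + c * z) :=
      div_nonneg (mul_nonneg hk hz0.le) (by linarith)
    have hfrac : k * z / (1 + c * z) ≤ k * z :=
      div_le_self (mul_nonneg hk hz0.le) (by linarith)
    rw [Real.norm_eq_abs, abs_of_nonneg (mul_nonneg hfracnn (Real.exp_pos _).le)]
    calc k * z / (1 + c * z) * Real.exp (-z) ≤ (k * z) * Real.exp (-z) :=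
            mul_le_mul_of_nonneg_right hfrac (Real.exp_pos _).le
      _ = k * (z * Real.exp (-z)) := by ring

lemma cnn {k : ℝ} (hk : 0 ≤ k) (a : ℝ) : 0 ≤ k * max a 0 :=
  mul_nonneg hk (le_max_right a 0)

lemma G_nonneg {k : ℝ} (hk : 0 ≤ k) (a : ℝ) : 0 ≤ Gfun k a := by
  refine setIntegral_nonneg measurableSet_Ioi (fun z hz => ?_)
  have hz0 : (0:ℝ) < z := hz
  have : 0 ≤ k * max a 0 * z := mul_nonneg (cnn hk a) hz0.le
  exact mul_nonneg (Real.log_nonneg (by linarith)) (Real.exp_pos _).le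

lemma P_nonneg {k : ℝ} (hk : 0 ≤ k) (a : ℝ) : 0 ≤ Pfun k a := by
  refine setIntegral_nonneg measurableSet_Ioi (fun z hz => ?_)
  have hz0 : (0:ℝ) < z := hz
  have : 0 ≤ k * max a 0 * z := mul_nonneg (cnn hk a) hz0.le
  exact mul_nonneg (div_nonneg (mul_nonneg hk hz0.le) (by linarith)) (Real.exp_pos _).le

lemma G_le {k : ℝ} (hk : 0 ≤ k) (a : ℝ) : Gfun k a ≤ k * max a 0 := by
  have hmono : Gfun k a ≤ ∫ z in Ioi (0:ℝ), (k * max a 0) * (z * Real.exp (-z)) := by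
    refine setIntegral_mono_on (int_log (cnn hk a)) (int_zexp.const_mul _)
      measurableSet_Ioi (fun z hz => ?_)
    have hz0 : (0:ℝ) < z := hz
    have hc : 0 ≤ k * max a 0 * z := mul_nonneg (cnn hk a) hz0.le
    have hlog : Real.log (1 + k * max a 0 * z) ≤ k * max a 0 * z := by
      have := Real.log_le_sub_one_of_pos (show (0:ℝ) < 1 + k * max a 0 * z by linarith)
      linarith
    calc Real.log (1 + k * max a 0 * z) * Real.exp (-z)
        ≤ (k * max a 0 * z) * Real.exp (-z) :=
          mul_le_mul_of_nonneg_right hlog (Real.exp_pos _).le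
      _ = (k * max a 0) * (z * Real.exp (-z)) := by ring
  rwa [integral_const_mul, val_zexp, mul_one] at hmono

lemma P_le {k : ℝ} (hk : 0 ≤ k) (a : ℝ) : Pfun k a ≤ k := by
  have hmono : Pfun k a ≤ ∫ z in Ioi (0:ℝ), k * (z * Real.exp (-z)) := by
    refine setIntegral_mono_on (int_frac hk (cnn hk a)) (int_zexp.const_mul _)
      measurableSet_Ioi (fun z hz => ?_)
    have hz0 : (0:ℝ) < z := hz
    have hc : 0 ≤ k * max a 0 * z := mul_nonneg (cnn hk a) hz0.le
    have hfrac : k * z / (1 + k * max a 0 * z) ≤ k * z :=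
      div_le_self (mul_nonneg hk hz0.le) (by linarith)
    calc k * z / (1 + k * max a 0 * z) * Real.exp (-z)
        ≤ (k * z) * Real.exp (-z) := mul_le_mul_of_nonneg_right hfrac (Real.exp_pos _).le
      _ = k * (z * Real.exp (-z)) := by ring
  rwa [integral_const_mul, val_zexp, mul_one] at hmono

lemma P_antitone {k : ℝ} (hk : 0 ≤ k) {a b : ℝ} (hab : a ≤ b) : Pfun k b ≤ Pfun k a := by
  refine setIntegral_mono_on (int_frac hk (cnn hk b)) (int_frac hk (cnn hk a))
    measurableSet_Ioi (fun z hz => ?_)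
  have hz0 : (0:ℝ) < z := hz
  have hca : 0 ≤ k * max a 0 * z := mul_nonneg (cnn hk a) hz0.le
  have hcb : k * max a 0 * z ≤ k * max b 0 * z :=
    mul_le_mul_of_nonneg_right
      (mul_le_mul_of_nonneg_left (max_le_max hab le_rfl) hk) hz0.le
  refine mul_le_mul_of_nonneg_right ?_ (Real.exp_pos _).le
  exact div_le_div_of_nonneg_left (mul_nonneg hk hz0.le) (by linarith) (by linarith)

lemma G_monotone {k : ℝ} (hk : 0 ≤ k) : Monotone (Gfun k) := by
  intro a b hab
  refine setIntegral_mono_on (int_log (cnn hk a)) (int_log (cnn hk b))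
    measurableSet_Ioi (fun z hz => ?_)
  have hz0 : (0:ℝ) < z := hz
  have hca : 0 ≤ k * max a 0 * z := mul_nonneg (cnn hk a) hz0.le
  have hcb : k * max a 0 * z ≤ k * max b 0 * z :=
    mul_le_mul_of_nonneg_right
      (mul_le_mul_of_nonneg_left (max_le_max hab le_rfl) hk) hz0.le
  refine mul_le_mul_of_nonneg_right ?_ (Real.exp_pos _).le
  exact (Real.log_le_log_iff (by linarith) (by linarith)).2 (by linarith)

lemma log_ineq {u v : ℝ} (hu : 0 ≤ u) (hv : 0 ≤ v) :
    Real.log (1 + v) - Real.log (1 + u) ≤ (v - u) / (1 + u) := by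
  have h1 : (0:ℝ) < 1 + u := by linarith
  have h2 : (0:ℝ) < 1 + v := by linarith
  have h := Real.log_le_sub_one_of_pos (div_pos h2 h1)
  rw [Real.log_div h2.ne' h1.ne'] at h
  have heq : (1 + v) / (1 + u) - 1 = (v - u) / (1 + u) := by
    field_simp
    ring
  linarith

lemma G_key {k : ℝ} (hk : 0 ≤ k) (a b : ℝ) :
    Gfun k b - Gfun k a ≤ Pfun k a * (max b 0 - max a 0) := by
  have hiA := int_log (c := k * max a 0) (cnn hk a)
  have hiB := int_log (c := k * max b 0) (cnn hk b)
  have hiP := int_frac (k := k) (c := k * max a 0) hk (cnn hk a)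
  have hsub : Gfun k b - Gfun k a = ∫ z in Ioi (0:ℝ),
      (Real.log (1 + k * max b 0 * z) * Real.exp (-z) -
        Real.log (1 + k * max a 0 * z) * Real.exp (-z)) :=
    (integral_sub hiB hiA).symm
  have hmono : (∫ z in Ioi (0:ℝ),
      (Real.log (1 + k * max b 0 * z) * Real.exp (-z) -
        Real.log (1 + k * max a 0 * z) * Real.exp (-z)))
      ≤ ∫ z in Ioi (0:ℝ),
        (max b 0 - max a 0) * (k * z / (1 + k * max a 0 * z) * Real.exp (-z)) := by
    refine setIntegral_mono_on (hiB.sub hiA) (hiP.const_mul _)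
      measurableSet_Ioi (fun z hz => ?_)
    have hz0 : (0:ℝ) < z := hz
    have hu : 0 ≤ k * max a 0 * z := mul_nonneg (cnn hk a) hz0.le
    have hv : 0 ≤ k * max b 0 * z := mul_nonneg (cnn hk b) hz0.le
    have hlog := log_ineq hu hv
    have h1 : (Real.log (1 + k * max b 0 * z) - Real.log (1 + k * max a 0 * z))
        * Real.exp (-z) ≤
        ((k * max b 0 * z - k * max a 0 * z) / (1 + k * max a 0 * z)) * Real.exp (-z) :=
      mul_le_mul_of_nonneg_right hlog (Real.exp_pos _).le
    calc Real.log (1 + k * max b 0 * z) * Real.exp (-z) -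
          Real.log (1 + k * max a 0 * z) * Real.exp (-z)
        = (Real.log (1 + k * max b 0 * z) - Real.log (1 + k * max a 0 * z))
            * Real.exp (-z) := by ring
      _ ≤ ((k * max b 0 * z - k * max a 0 * z) / (1 + k * max a 0 * z)) * Real.exp (-z) := h1
      _ = (max b 0 - max a 0) * (k * z / (1 + k * max a 0 * z) * Real.exp (-z)) := by
          ring
  rw [integral_const_mul] at hmono
  rw [hsub]
  calc (∫ z in Ioi (0:ℝ),
      (Real.log (1 + k * max b 0 * z) * Real.exp (-z) -
        Real.log (1 + k * max a 0 * z) * Real.exp (-z)))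
      ≤ (max b 0 - max a 0) * Pfun k a := hmono
    _ = Pfun k a * (max b 0 - max a 0) := mul_comm _ _

lemma G_lipschitz {k : ℝ} (hk : 0 ≤ k) (a b : ℝ) :
    |Gfun k a - Gfun k b| ≤ k * |a - b| := by
  rcases le_total a b with hab | hab
  · have h1 : Gfun k a ≤ Gfun k b := G_monotone hk hab
    have h2 := G_key hk a b
    have h6 : (0:ℝ) ≤ max b 0 - max a 0 :=
      sub_nonneg.2 (max_le_max hab (le_refl (0:ℝ)))
    have h4 : |max b 0 - max a 0| ≤ |b - a| := abs_max_sub_max_le_abs b a 0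
    have h5 : max b 0 - max a 0 ≤ b - a := by
      rw [abs_of_nonneg h6] at h4
      calc max b 0 - max a 0 ≤ |b - a| := h4
        _ = b - a := abs_of_nonneg (sub_nonneg.2 hab)
    rw [abs_sub_comm, abs_of_nonneg (sub_nonneg.2 h1), abs_sub_comm,
      abs_of_nonneg (sub_nonneg.2 hab)]
    nlinarith [P_le hk a, P_nonneg hk a]
  · have h1 : Gfun k b ≤ Gfun k a := G_monotone hk hab
    have h2 := G_key hk b a
    have h6 : (0:ℝ) ≤ max a 0 - max b 0 :=
      sub_nonneg.2 (max_le_max hab (le_refl (0:ℝ)))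
    have h4 : |max a 0 - max b 0| ≤ |a - b| := abs_max_sub_max_le_abs a b 0
    have h5 : max a 0 - max b 0 ≤ a - b := by
      rw [abs_of_nonneg h6] at h4
      calc max a 0 - max b 0 ≤ |a - b| := h4
        _ = a - b := abs_of_nonneg (sub_nonneg.2 hab)
    rw [abs_of_nonneg (sub_nonneg.2 h1), abs_of_nonneg (sub_nonneg.2 hab)]
    nlinarith [P_le hk b, P_nonneg hk b]

lemma G_continuous {k : ℝ} (hk : 0 ≤ k) : Continuous (Gfun k) := by
  have : LipschitzWith k.toNNReal (Gfun k) := by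
    refine LipschitzWith.of_dist_le_mul (fun a b => ?_)
    rw [Real.dist_eq, Real.dist_eq, Real.coe_toNNReal k hk]
    exact G_lipschitz hk a b
  exact this.continuous

end CnoAux

namespace CnoAux

lemma fubini_step {x y ψ : ℝ → ℝ} {k : ℝ} (hk : 0 ≤ k)
    (hx : IntegrableOn x (Ioo 0 1)) (hy : IntegrableOn y (Ioo 0 1))
    (hψm : MonotoneOn ψ (Ioo (0:ℝ) 1))
    (hψ0 : ∀ t ∈ Ioo (0:ℝ) 1, 0 ≤ ψ t) (hψk : ∀ t ∈ Ioo (0:ℝ) 1, ψ t ≤ k)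
    (hpar : ∀ s ∈ Ico (0:ℝ) 1, 0 ≤ ∫ t in Ioo (0:ℝ) s, (x t - y t))
    (htot : (∫ t in Ioo (0:ℝ) 1, (x t - y t)) = 0) :
    (∫ t in Ioo (0:ℝ) 1, ψ t * (x t - y t)) ≤ 0 := by
  set μI := volume.restrict (Ioo (0:ℝ) 1) with hμIdef
  set ν := volume.restrict (Ioc (0:ℝ) k) with hνdef
  set h : ℝ → ℝ := fun t => x t - y t with hhdef
  have hh_int : Integrable h μI := hx.sub hy
  have hψae : AEMeasurable ψ μI :=
    aemeasurable_restrict_of_monotoneOn measurableSet_Ioo hψm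
  have hhae : AEMeasurable h μI := hh_int.aemeasurable
  set ψ' := hψae.mk ψ with hψ'def
  have hψ'meas : Measurable ψ' := hψae.measurable_mk
  have hψ'eq : ψ =ᵐ[μI] ψ' := hψae.ae_eq_mk
  set h' := hhae.mk h with hh'def
  have hh'meas : Measurable h' := hhae.measurable_mk
  have hh'eq : h =ᵐ[μI] h' := hhae.ae_eq_mk
  have hh'_int : Integrable h' μI := hh_int.congr hh'eq
  -- the product function
  set F : ℝ → ℝ → ℝ := fun t u => Set.indicator (Iio (ψ' t)) (fun _ => h' t) u with hFdef
  have hFuncEq : Function.uncurry F = fun q : ℝ × ℝ =>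
      if q.2 < ψ' q.1 then h' q.1 else 0 := by
    funext q
    simp [hFdef, Function.uncurry, Set.indicator_apply]
  have hFmeas : Measurable (Function.uncurry F) := by
    rw [hFuncEq]
    exact Measurable.ite
      (measurableSet_lt measurable_snd (hψ'meas.comp measurable_fst))
      (hh'meas.comp measurable_fst) measurable_const
  have hFsm : AEStronglyMeasurable (Function.uncurry F) (μI.prod ν) :=
    hFmeas.aestronglyMeasurable
  have hνuniv : (ν univ).toReal = k := by
    rw [hνdef]
    simp [Real.volume_Ioc, ENNReal.toReal_ofReal hk]
  -- integrability over the product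
  have hF_int : Integrable (Function.uncurry F) (μI.prod ν) := by
    refine (integrable_prod_iff hFsm).2 ⟨?_, ?_⟩
    · refine Filter.Eventually.of_forall (fun t => ?_)
      simpa [hFdef] using (integrable_const (h' t) (μ := ν)).indicator measurableSet_Iio
    · refine Integrable.mono' (hh'_int.norm.const_mul k)
        (hFsm.norm.integral_prod_right') ?_
      refine Filter.Eventually.of_forall (fun t => ?_)
      have h1 : ∀ u : ℝ, ‖Function.uncurry F (t, u)‖ ≤ ‖h' t‖ := by
        intro u
        simpa [Function.uncurry, hFdef] using
          norm_indicator_le_norm_self (s := Iio (ψ' t)) (fun _ => h' t) u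
      have hnn : 0 ≤ ∫ u, ‖Function.uncurry F (t, u)‖ ∂ν :=
        integral_nonneg (fun u => norm_nonneg _)
      rw [Real.norm_eq_abs, abs_of_nonneg hnn]
      calc (∫ u, ‖Function.uncurry F (t, u)‖ ∂ν)
          ≤ ∫ _, ‖h' t‖ ∂ν := by
            refine integral_mono_of_nonneg
              (Filter.Eventually.of_forall (fun u => norm_nonneg _))
              (integrable_const _) (Filter.Eventually.of_forall h1)
        _ = k * ‖h' t‖ := by rw [integral_const, Measure.real, hνuniv, smul_eq_mul]
        _ = k * |h' t| := by rw [Real.norm_eq_abs]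
  -- Step A : the inner integral recovers ψ t * h t
  have hstepA : (∫ t, ψ t * h t ∂μI) = ∫ t, (∫ u, F t u ∂ν) ∂μI := by
    refine integral_congr_ae ?_
    filter_upwards [hψ'eq, hh'eq, ae_restrict_mem measurableSet_Ioo] with t h1 h2 h3
    have hc0 : 0 ≤ ψ' t := by rw [← h1]; exact hψ0 t h3
    have hck : ψ' t ≤ k := by rw [← h1]; exact hψk t h3
    have : (∫ u, F t u ∂ν) = (ν (Iio (ψ' t))).toReal * h' t := by
      rw [hFdef]
      rw [integral_indicator measurableSet_Iio, setIntegral_const, smul_eq_mul]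
      rfl
    rw [this, hνdef, Measure.restrict_apply measurableSet_Iio]
    have hset : Iio (ψ' t) ∩ Ioc 0 k = Ioo (0:ℝ) (ψ' t) := by
      ext u
      simp only [mem_inter_iff, mem_Iio, mem_Ioc, mem_Ioo]
      constructor
      · rintro ⟨h4, h5, h6⟩; exact ⟨h5, h4⟩
      · rintro ⟨h4, h5⟩; exact ⟨h5, h4, le_trans h5.le hck⟩
    rw [hset, Real.volume_Ioo, sub_zero, ENNReal.toReal_ofReal hc0, h1, h2]
  -- Step C : for every u the t-integral is nonpositive
  have hstepC : ∀ u : ℝ, (∫ t, F t u ∂μI) ≤ 0 := by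
    intro u
    set S' : Set ℝ := {t : ℝ | u < ψ' t} with hS'def
    have hS'meas : MeasurableSet S' := measurableSet_lt measurable_const hψ'meas
    have hFu : (fun t => F t u) = Set.indicator S' h' := by
      funext t
      simp [hFdef, hS'def, Set.indicator_apply]
    rw [hFu, integral_indicator hS'meas, hμIdef,
      Measure.restrict_restrict hS'meas]
    -- compare with the genuine level set
    set T : Set ℝ := {t | t ∈ Ioo (0:ℝ) 1 ∧ u < ψ t} with hTdef
    have haeψ : ∀ᵐ t ∂(volume : Measure ℝ), t ∈ Ioo (0:ℝ) 1 → ψ t = ψ' t :=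
      (ae_restrict_iff' measurableSet_Ioo).1 hψ'eq
    have hsetae : (S' ∩ Ioo (0:ℝ) 1 : Set ℝ) =ᵐ[volume] T := by
      rw [Filter.eventuallyEq_set]
      filter_upwards [haeψ] with t ht
      simp only [mem_inter_iff, hS'def, mem_setOf_eq, hTdef]
      constructor
      · rintro ⟨h4, h5⟩
        refine ⟨h5, ?_⟩
        rw [ht h5]; exact h4
      · rintro ⟨h4, h5⟩
        refine ⟨?_, h4⟩
        rw [← ht h4]; exact h5
    rw [Measure.restrict_congr_set hsetae]
    rcases Set.eq_empty_or_nonempty T with hT | hT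
    · rw [hT]
      simp
    · set a := sInf T with hadef
      have hbdd : BddBelow T := ⟨0, fun t ht => (ht.1.1).le⟩
      obtain ⟨t₀, ht₀⟩ := hT
      have ha0 : 0 ≤ a := le_csInf ⟨t₀, ht₀⟩ (fun t ht => (ht.1.1).le)
      have ha1 : a < 1 := lt_of_le_of_lt (csInf_le hbdd ht₀) ht₀.1.2
      have hupper : ∀ t₁ ∈ T, ∀ t₂ ∈ Ioo (0:ℝ) 1, t₁ ≤ t₂ → t₂ ∈ T := by
        intro t₁ ht₁ t₂ ht₂ hle
        exact ⟨ht₂, lt_of_lt_of_le ht₁.2 (hψm ht₁.1 ht₂ hle)⟩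
      have hsingle : ∀ᵐ t ∂(volume : Measure ℝ), t ∉ ({a} : Set ℝ) :=
        compl_mem_ae_iff.2 (measure_singleton a)
      have hTae : T =ᵐ[volume] Ioo a 1 := by
        rw [Filter.eventuallyEq_set]
        filter_upwards [hsingle] with t hta
        have hta' : t ≠ a := hta
        constructor
        · intro ht
          have h4 : a ≤ t := csInf_le hbdd ht
          exact ⟨lt_of_le_of_ne h4 (Ne.symm hta'), ht.1.2⟩
        · intro ht
          obtain ⟨t₁, ht₁, hlt⟩ := exists_lt_of_csInf_lt ⟨t₀, ht₀⟩ ht.1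
          have htI : t ∈ Ioo (0:ℝ) 1 := ⟨lt_of_le_of_lt ha0 ht.1, ht.2⟩
          exact hupper t₁ ht₁ t htI hlt.le
      rw [Measure.restrict_congr_set hTae]
      have hh'sub : ∀ᵐ t ∂(volume.restrict (Ioo a 1)), h t = h' t :=
        ae_restrict_of_ae_restrict_of_subset (Ioo_subset_Ioo_left ha0) hh'eq
      rw [← integral_congr_ae hh'sub]
      have hh_intOn : IntegrableOn h (Ioo (0:ℝ) 1) := hh_int
      have hint1 : IntegrableOn h (Ioo 0 a) := hh_intOn.mono_set (Ioo_subset_Ioo_right ha1.le)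
      have hint2 : IntegrableOn h (Ioo a 1) := hh_intOn.mono_set (Ioo_subset_Ioo_left ha0)
      have hdisj : Disjoint (Ioo (0:ℝ) a) (Ioo a 1) :=
        Set.disjoint_left.2 (fun t h1 h2 => absurd h2.1 (not_lt.2 h1.2.le))
      have hsplit : (∫ t in Ioo (0:ℝ) a ∪ Ioo a 1, h t) =
          (∫ t in Ioo (0:ℝ) a, h t) + ∫ t in Ioo a 1, h t :=
        setIntegral_union hdisj measurableSet_Ioo hint1 hint2
      have hunion : (Ioo (0:ℝ) a ∪ Ioo a 1 : Set ℝ) =ᵐ[volume] Ioo (0:ℝ) 1 := by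
        rw [Filter.eventuallyEq_set]
        filter_upwards [hsingle] with t hta
        have hta' : t ≠ a := hta
        simp only [mem_union, mem_Ioo]
        constructor
        · rintro (⟨h4, h5⟩ | ⟨h4, h5⟩)
          · exact ⟨h4, lt_trans h5 ha1⟩
          · exact ⟨lt_of_le_of_lt ha0 h4, h5⟩
        · rintro ⟨h4, h5⟩
          rcases lt_or_gt_of_ne hta' with hlt | hgt
          · exact Or.inl ⟨h4, hlt⟩
          · exact Or.inr ⟨hgt, h5⟩
      have heqtot : (∫ t in Ioo (0:ℝ) a ∪ Ioo a 1, h t) = ∫ t in Ioo (0:ℝ) 1, h t :=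
        setIntegral_congr_set hunion
      have htot' : (∫ t in Ioo (0:ℝ) 1, h t) = 0 := htot
      have hHa : 0 ≤ ∫ t in Ioo (0:ℝ) a, h t := hpar a ⟨ha0, ha1⟩
      have hgoal : (∫ t in Ioo a 1, h t) ≤ 0 := by linarith
      exact hgoal
  have hswap : (∫ t, (∫ u, F t u ∂ν) ∂μI) = ∫ u, (∫ t, F t u ∂μI) ∂ν :=
    integral_integral_swap hF_int
  have hfinal : (∫ t, ψ t * h t ∂μI) ≤ 0 := by
    rw [hstepA, hswap]
    exact integral_nonpos (fun u => hstepC u)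
  exact hfinal

end CnoAux

/-- `x` majorizes `y` on (0,1): partial integrals of the decreasing rearrangements are
ordered and the total integrals coincide. -/
def Majorizes (x y : ℝ → ℝ) : Prop :=
  (∀ s ∈ Ico (0 : ℝ) 1,
      (∫ t in Ioo (0 : ℝ) s, decRearr y t) ≤ ∫ t in Ioo (0 : ℝ) s, decRearr x t) ∧
    (∫ t in Ioo (0 : ℝ) 1, decRearr x t) = ∫ t in Ioo (0 : ℝ) 1, decRearr y t

/-- Average rate with no CSI at the transmitter (equal power allocation):
`C_no(σ,ρ,W) = W ∫₀¹ E_z[log(1 + (ρ/W) σ(f) z)] df`, with `z` exponential of mean one. -/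
noncomputable def Cno (σ : ℝ → ℝ) (ρ W : ℝ) : ℝ :=
  W * ∫ f in Ioo (0 : ℝ) 1,
    ∫ z in Ioi (0 : ℝ), Real.log (1 + (ρ / W) * σ f * z) * Real.exp (-z)

/-- If `σ₁ ⪰ σ₂` then `C_no(σ₁,ρ,W) ≤ C_no(σ₂,ρ,W)`: Schur-concavity of the average rate
with no transmitter CSI in the spectral fading variance. -/
theorem Cno_schur_concave (σ₁ σ₂ : ℝ → ℝ)
    (h₁nonneg : ∀ f ∈ Ioo (0 : ℝ) 1, 0 ≤ σ₁ f)
    (h₂nonneg : ∀ f ∈ Ioo (0 : ℝ) 1, 0 ≤ σ₂ f)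
    (h₁cont : ContinuousOn σ₁ (Ioo 0 1))
    (h₂cont : ContinuousOn σ₂ (Ioo 0 1))
    (h₁int : IntegrableOn σ₁ (Ioo 0 1))
    (h₂int : IntegrableOn σ₂ (Ioo 0 1))
    (hmaj : Majorizes σ₁ σ₂)
    (ρ W : ℝ) (hρ : 0 ≤ ρ) (hW : 0 < W) :
    Cno σ₁ ρ W ≤ Cno σ₂ ρ W := by
  classical
  set k := ρ / W with hkdef
  have hk : 0 ≤ k := div_nonneg hρ hW.le
  -- rewrite Cno via Gfun
  have hCno : ∀ σ : ℝ → ℝ, (∀ f ∈ Ioo (0:ℝ) 1, 0 ≤ σ f) →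
      Cno σ ρ W = W * ∫ f in Ioo (0:ℝ) 1, CnoAux.Gfun k (σ f) := by
    intro σ hσ
    unfold Cno
    congr 1
    refine setIntegral_congr_fun measurableSet_Ioo (fun f hf => ?_)
    simp only [CnoAux.Gfun, max_eq_left (hσ f hf), hkdef]
  have hGint : ∀ σ : ℝ → ℝ, (∀ f ∈ Ioo (0:ℝ) 1, 0 ≤ σ f) →
      ContinuousOn σ (Ioo 0 1) → IntegrableOn σ (Ioo 0 1) →
      IntegrableOn (fun f => CnoAux.Gfun k (σ f)) (Ioo (0:ℝ) 1) := by
    intro σ hσ hcont hint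
    refine Integrable.mono' (hint.norm.const_mul k)
      ((CnoAux.G_continuous hk).measurable.comp_aemeasurable
        (hcont.aemeasurable measurableSet_Ioo)).aestronglyMeasurable ?_
    filter_upwards [ae_restrict_mem measurableSet_Ioo] with f hf
    rw [Real.norm_eq_abs, abs_of_nonneg (CnoAux.G_nonneg hk _)]
    calc CnoAux.Gfun k (σ f) ≤ k * max (σ f) 0 := CnoAux.G_le hk _
      _ = k * σ f := by rw [max_eq_left (hσ f hf)]
      _ ≤ k * ‖σ f‖ := mul_le_mul_of_nonneg_left (le_abs_self _) hk
  -- the rearrangements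
  have hxint : IntegrableOn (decRearr σ₁) (Ioo (0:ℝ) 1) :=
    CnoAux.integrable_decRearr h₁nonneg h₁cont h₁int
  have hyint : IntegrableOn (decRearr σ₂) (Ioo (0:ℝ) 1) :=
    CnoAux.integrable_decRearr h₂nonneg h₂cont h₂int
  have hxnn : ∀ t ∈ Ioo (0:ℝ) 1, 0 ≤ decRearr σ₁ t :=
    fun t ht => CnoAux.decRearr_nonneg h₁nonneg h₁cont ht
  have hynn : ∀ t ∈ Ioo (0:ℝ) 1, 0 ≤ decRearr σ₂ t :=
    fun t ht => CnoAux.decRearr_nonneg h₂nonneg h₂cont ht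
  have e1 : (∫ f in Ioo (0:ℝ) 1, CnoAux.Gfun k (σ₁ f))
      = ∫ t in Ioo (0:ℝ) 1, CnoAux.Gfun k (decRearr σ₁ t) :=
    CnoAux.integral_comp_decRearr h₁nonneg h₁cont (CnoAux.G_continuous hk)
  have e2 : (∫ f in Ioo (0:ℝ) 1, CnoAux.Gfun k (σ₂ f))
      = ∫ t in Ioo (0:ℝ) 1, CnoAux.Gfun k (decRearr σ₂ t) :=
    CnoAux.integral_comp_decRearr h₂nonneg h₂cont (CnoAux.G_continuous hk)
  have hGx : IntegrableOn (fun t => CnoAux.Gfun k (decRearr σ₁ t)) (Ioo (0:ℝ) 1) :=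
    CnoAux.integrable_comp_decRearr h₁nonneg h₁cont (CnoAux.G_continuous hk)
      (hGint σ₁ h₁nonneg h₁cont h₁int)
  have hGy : IntegrableOn (fun t => CnoAux.Gfun k (decRearr σ₂ t)) (Ioo (0:ℝ) 1) :=
    CnoAux.integrable_comp_decRearr h₂nonneg h₂cont (CnoAux.G_continuous hk)
      (hGint σ₂ h₂nonneg h₂cont h₂int)
  -- ψ and the concavity bound
  set ψ : ℝ → ℝ := fun t => CnoAux.Pfun k (decRearr σ₂ t) with hψdef
  have hψm : MonotoneOn ψ (Ioo (0:ℝ) 1) := fun t1 h1 t2 h2 h12 =>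
    CnoAux.P_antitone hk (CnoAux.decRearr_antitoneOn h₂nonneg h₂cont h1 h2 h12)
  have hψ0 : ∀ t ∈ Ioo (0:ℝ) 1, 0 ≤ ψ t := fun t ht => CnoAux.P_nonneg hk _
  have hψk : ∀ t ∈ Ioo (0:ℝ) 1, ψ t ≤ k := fun t ht => CnoAux.P_le hk _
  have hψae : AEMeasurable ψ (volume.restrict (Ioo (0:ℝ) 1)) :=
    aemeasurable_restrict_of_monotoneOn measurableSet_Ioo hψm
  have hptws : ∀ t ∈ Ioo (0:ℝ) 1,
      CnoAux.Gfun k (decRearr σ₁ t) - CnoAux.Gfun k (decRearr σ₂ t)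
        ≤ ψ t * (decRearr σ₁ t - decRearr σ₂ t) := by
    intro t ht
    have h := CnoAux.G_key hk (decRearr σ₂ t) (decRearr σ₁ t)
    rwa [max_eq_left (hxnn t ht), max_eq_left (hynn t ht)] at h
  have hprod : IntegrableOn
      (fun t => ψ t * (decRearr σ₁ t - decRearr σ₂ t)) (Ioo (0:ℝ) 1) := by
    refine Integrable.mono' (((hxint.sub hyint).norm).const_mul k)
      (hψae.mul (hxint.sub hyint).aemeasurable).aestronglyMeasurable ?_
    filter_upwards [ae_restrict_mem measurableSet_Ioo] with t ht
    rw [Real.norm_eq_abs, abs_mul, abs_of_nonneg (hψ0 t ht)]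
    exact mul_le_mul_of_nonneg_right (hψk t ht) (abs_nonneg _)
  have hdiff : (∫ t in Ioo (0:ℝ) 1, CnoAux.Gfun k (decRearr σ₁ t))
      - (∫ t in Ioo (0:ℝ) 1, CnoAux.Gfun k (decRearr σ₂ t))
      ≤ ∫ t in Ioo (0:ℝ) 1, ψ t * (decRearr σ₁ t - decRearr σ₂ t) := by
    rw [← integral_sub hGx hGy]
    exact setIntegral_mono_on (hGx.sub hGy) hprod measurableSet_Ioo
      (fun t ht => hptws t ht)
  have hpar : ∀ s ∈ Ico (0:ℝ) 1,
      0 ≤ ∫ t in Ioo (0:ℝ) s, (decRearr σ₁ t - decRearr σ₂ t) := by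
    intro s hs
    have h1 : IntegrableOn (decRearr σ₁) (Ioo 0 s) :=
      hxint.mono_set (Ioo_subset_Ioo_right hs.2.le)
    have h2 : IntegrableOn (decRearr σ₂) (Ioo 0 s) :=
      hyint.mono_set (Ioo_subset_Ioo_right hs.2.le)
    rw [integral_sub h1 h2]
    have := hmaj.1 s hs
    linarith
  have htot : (∫ t in Ioo (0:ℝ) 1, (decRearr σ₁ t - decRearr σ₂ t)) = 0 := by
    rw [integral_sub hxint hyint]
    have := hmaj.2
    linarith
  have hkey := CnoAux.fubini_step hk hxint hyint hψm hψ0 hψk hpar htot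
  rw [hCno σ₁ h₁nonneg, hCno σ₂ h₂nonneg, e1, e2]
  exact mul_le_mul_of_nonneg_left (by linarith) hW.le
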